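/- Let $f$ be the multiplicative function with $f(p) = 1$, $f(p^2) = -6$, and $f(p^\nu) = 0$ for all primes $p$ and all $\nu \ge 3$. Then $\lim_{x\to\infty} \frac{1}{x} \sum_{n \le x} (-1)^{n-1} f(n) = \prod_{p > 2 \text{ prime}} \left(1 - \frac{7}{p^2} + \frac{6}{p^3}\right)$, and this limit is nonzero, while the mean value $\lim_{x\to\infty}\frac{1}{x}\sum_{n\le x} f(n) = 0$. -/

import Mathlib

open scoped BigOperators
open Filter

section helpers

lemma swap_sum (g : ℕ → ℝ) (N : ℕ) :
    ∑ n ∈ Finset.Icc 1 N, ∑ d ∈ n.divisors, g d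
      = ∑ d ∈ Finset.Icc 1 N, g d * (N / d : ℕ) := by
  have h1 : ∀ n ∈ Finset.Icc 1 N, ∑ d ∈ n.divisors, g d
      = ∑ d ∈ Finset.Icc 1 N, if d ∣ n then g d else 0 := by
    intro n hn
    rw [Finset.mem_Icc] at hn
    rw [← Finset.sum_filter]
    apply Finset.sum_congr _ (fun _ _ => rfl)
    ext d
    simp only [Nat.mem_divisors, Finset.mem_filter, Finset.mem_Icc]
    constructor
    · rintro ⟨hd, hn0⟩
      exact ⟨⟨Nat.one_le_iff_ne_zero.mpr (fun h => by simp [h] at hd; omega),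
        le_trans (Nat.le_of_dvd (by omega) hd) hn.2⟩, hd⟩
    · rintro ⟨_, hd⟩
      exact ⟨hd, by omega⟩
  rw [Finset.sum_congr rfl h1, Finset.sum_comm]
  apply Finset.sum_congr rfl
  intro d _
  rw [← Finset.sum_filter]
  have : ∀ x ∈ Finset.filter (fun n => d ∣ n) (Finset.Icc 1 N), g d = g d := fun _ _ => rfl
  rw [Finset.sum_const, show Finset.Icc 1 N = Finset.Ioc 0 N from rfl,
    Nat.Ioc_filter_dvd_card_eq_div, nsmul_eq_mul, mul_comm]


lemma div_div_tendsto (d : ℕ) (hd : 1 ≤ d) :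
    Tendsto (fun N : ℕ => ((N / d : ℕ) : ℝ) / (N : ℝ)) atTop (nhds (1 / (d : ℝ))) := by
  have hd0 : (0:ℝ) < d := by exact_mod_cast hd
  apply tendsto_of_tendsto_of_tendsto_of_le_of_le' (g := fun N : ℕ => 1/(d:ℝ) - 1/(N:ℝ))
      (h := fun _ : ℕ => 1/(d:ℝ))
  · simpa using (tendsto_const_nhds (x := 1/(d:ℝ))).sub tendsto_one_div_atTop_nhds_zero_nat
  · exact tendsto_const_nhds
  · filter_upwards [eventually_ge_atTop 1] with N hN
    have hN0 : (0:ℝ) < N := by exact_mod_cast hN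
    have key : (N : ℝ) < (d : ℝ) * ((N / d : ℕ) : ℝ) + d := by
      have h2 : N < d * (N / d) + d := by
        have := Nat.div_add_mod N d
        have := Nat.mod_lt N (show 0 < d from hd)
        omega
      exact_mod_cast h2
    rw [div_sub_div _ _ (ne_of_gt hd0) (ne_of_gt hN0), div_le_div_iff₀ (by positivity) hN0]
    nlinarith [key]
  · filter_upwards with N
    rcases Nat.eq_zero_or_pos N with h | h
    · simp [h]
    · have hN0 : (0:ℝ) < N := by exact_mod_cast h
      rw [div_le_div_iff₀ hN0 hd0]
      have : ((N / d : ℕ) : ℝ) ≤ (N:ℝ) / d := Nat.cast_div_le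
      calc ((N / d : ℕ) : ℝ) * d ≤ ((N:ℝ)/d) * d := by nlinarith
        _ = N := by field_simp
        _ = 1 * N := (one_mul _).symm

lemma wintner (g : ℕ → ℝ) (hg0 : g 0 = 0)
    (hsum : Summable (fun n : ℕ => |g n| / n)) :
    Tendsto (fun N : ℕ => (1/(N:ℝ)) * ∑ d ∈ Finset.Icc 1 N, g d * (N / d : ℕ)) atTop
      (nhds (∑' d : ℕ, g d / d)) := by
  set u : ℕ → ℕ → ℝ := fun N d => g d * ((N / d : ℕ) : ℝ) / (N : ℝ) with hu
  have key : ∀ N : ℕ, (1/(N:ℝ)) * ∑ d ∈ Finset.Icc 1 N, g d * (N / d : ℕ) = ∑' d, u N d := by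
    intro N
    rw [tsum_eq_sum (s := Finset.Icc 1 N)]
    · rw [Finset.mul_sum]
      apply Finset.sum_congr rfl
      intro d _
      rw [hu]; ring
    · intro d hd
      simp only [Finset.mem_Icc, not_and_or, not_le] at hd
      rcases hd with hd | hd
      · interval_cases d
        simp [hu, hg0]
      · simp [hu, Nat.div_eq_of_lt hd]
  simp only [key]
  apply tendsto_tsum_of_dominated_convergence (bound := fun d : ℕ => |g d| / d) hsum
  · intro d
    rcases Nat.eq_zero_or_pos d with h | h
    · simpa [hu, h, hg0] using tendsto_const_nhds
    · have := (div_div_tendsto d h).const_mul (g d)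
      simp only [hu, mul_div_assoc]
      convert this using 2
      rw [mul_one_div]
  · filter_upwards with N d
    rcases Nat.eq_zero_or_pos d with h | h
    · simp [hu, h, hg0]
    · have h1 : ((N / d : ℕ) : ℝ) / (N:ℝ) ≤ 1 / d := by
        rcases Nat.eq_zero_or_pos N with hN | hN
        · simp [hN]
        · have hN0 : (0:ℝ) < N := by exact_mod_cast hN
          have hd0 : (0:ℝ) < d := by exact_mod_cast h
          rw [div_le_div_iff₀ hN0 hd0]
          have : ((N / d : ℕ) : ℝ) ≤ (N:ℝ) / d := Nat.cast_div_le
          calc ((N / d : ℕ) : ℝ) * d ≤ ((N:ℝ)/d) * d := by nlinarith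
            _ = N := by field_simp
            _ = 1 * N := (one_mul _).symm
      have h2 : (0:ℝ) ≤ ((N / d : ℕ) : ℝ) / (N:ℝ) := by positivity
      rw [hu]
      simp only [Real.norm_eq_abs, abs_div, abs_mul, Nat.abs_cast, mul_div_assoc]
      calc |g d| * (((N / d : ℕ) : ℝ) / (N:ℝ)) ≤ |g d| * (1/d) := by
            apply mul_le_mul_of_nonneg_left h1 (abs_nonneg _)
        _ = |g d| / d := by rw [mul_one_div]


lemma local_tsum_eq (T : ℕ → ℝ) (p : ℕ) (hT4 : ∀ e, 4 ≤ e → T (p^e) = 0) :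
    ∑' e : ℕ, T (p^e) = T 1 + T p + T (p^2) + T (p^3) := by
  rw [tsum_eq_sum (s := Finset.range 4) (fun e he => hT4 e (by simpa using he))]
  rw [Finset.sum_range_succ, Finset.sum_range_succ, Finset.sum_range_succ,
    Finset.sum_range_one, pow_zero, pow_one]

set_option maxHeartbeats 1000000 in
lemma summable_aux (g : ℕ → ℝ) (hg0 : g 0 = 0) (hg1 : g 1 = 1)
    (hmul : ∀ m n : ℕ, Nat.Coprime m n → g (m*n) = g m * g n)
    (h2 : |g 2| ≤ 2)
    (hp1 : ∀ p : ℕ, p.Prime → 2 < p → g p = 0)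
    (hp2 : ∀ p : ℕ, p.Prime → |g (p^2)| ≤ 7)
    (hp3 : ∀ p : ℕ, p.Prime → |g (p^3)| ≤ 6)
    (hp4 : ∀ p : ℕ, p.Prime → ∀ e, 4 ≤ e → g (p^e) = 0) :
    Summable (fun n : ℕ => |g n| / n) := by
  set T : ℕ → ℝ := fun n => |g n| / n with hT
  have hT0 : ∀ n, 0 ≤ T n := fun n => by positivity
  have hT1 : T 1 = 1 := by simp [hT, hg1]
  have hTmul : ∀ {m n : ℕ}, Nat.Coprime m n → T (m * n) = T m * T n := by
    intro m n hmn
    simp only [hT, hmul m n hmn, abs_mul, Nat.cast_mul, div_mul_div_comm]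
  have hTloc : ∀ {p : ℕ}, p.Prime → Summable (fun e : ℕ => ‖T (p ^ e)‖) := by
    intro p hp
    apply summable_of_ne_finset_zero (s := Finset.range 4)
    intro e he
    simp only [hT, hp4 p hp e (by simpa using he), abs_zero, zero_div, norm_zero]
  have hLpos : ∀ p : ℕ, 0 ≤ ∑' e : ℕ, T (p^e) := fun p => tsum_nonneg (fun e => hT0 _)
  have hLbound : ∀ p : ℕ, p.Prime →
      ∑' e : ℕ, T (p^e) ≤ (if p = 2 then 2 else 1) * (1 + 13/(p:ℝ)^2) := by
    intro p hp
    have hp2' : (2:ℝ) ≤ p := by exact_mod_cast hp.two_le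
    have hppos : (0:ℝ) < p := by linarith
    rw [local_tsum_eq T p (fun e he => by simp [hT, hp4 p hp e he])]
    have e2 : T (p^2) ≤ 7/(p:ℝ)^2 := by
      rw [hT]; push_cast
      exact div_le_div₀ (by norm_num) (hp2 p hp) (by positivity) le_rfl
    have e3 : T (p^3) ≤ 6/(p:ℝ)^3 := by
      rw [hT]; push_cast
      exact div_le_div₀ (by norm_num) (hp3 p hp) (by positivity) le_rfl
    by_cases h : p = 2
    · subst h
      have e1 : T 2 ≤ 1 := by
        rw [hT]; simp only [Nat.cast_ofNat]
        rw [div_le_one (by norm_num)]; linarith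
      rw [if_pos rfl]
      norm_num at e2 e3 ⊢
      rw [hT1]
      nlinarith
    · have hgt : 2 < p := lt_of_le_of_ne hp.two_le (Ne.symm h)
      have e1 : T p = 0 := by simp [hT, hp1 p hp hgt]
      have e4 : 6/(p:ℝ)^3 ≤ 6/(p:ℝ)^2 :=
        div_le_div_of_nonneg_left (by norm_num) (by positivity) (by nlinarith)
      rw [if_neg h, one_mul, hT1, e1]
      have : 7/(p:ℝ)^2 + 6/(p:ℝ)^2 = 13/(p:ℝ)^2 := by ring
      linarith
  -- uniform bound on products of local factors
  set B : ℝ := ∑' n : ℕ, 13 * (1/(n:ℝ)^2) with hB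
  have hBsum : Summable (fun n : ℕ => 13 * (1/(n:ℝ)^2)) :=
    (Real.summable_one_div_nat_pow.mpr one_lt_two).mul_left 13
  have prodbound : ∀ s : Finset ℕ,
      ∏ p ∈ s.filter Nat.Prime, ∑' e : ℕ, T (p^e) ≤ 2 * Real.exp B := by
    intro s
    calc ∏ p ∈ s.filter Nat.Prime, ∑' e : ℕ, T (p^e)
        ≤ ∏ p ∈ s.filter Nat.Prime, (if p = 2 then 2 else 1) * (1 + 13/(p:ℝ)^2) := by
          apply Finset.prod_le_prod (fun p _ => hLpos p)
          intro p hps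
          exact hLbound p (Finset.mem_filter.mp hps).2
      _ = (∏ p ∈ s.filter Nat.Prime, (if p = 2 then (2:ℝ) else 1))
            * ∏ p ∈ s.filter Nat.Prime, (1 + 13/(p:ℝ)^2) := Finset.prod_mul_distrib
      _ ≤ 2 * Real.exp B := by
          apply mul_le_mul
          · rw [Finset.prod_ite_eq' (s.filter Nat.Prime) 2 (fun _ => (2:ℝ))]
            split <;> norm_num
          · calc ∏ p ∈ s.filter Nat.Prime, (1 + 13/(p:ℝ)^2)
                ≤ ∏ p ∈ s.filter Nat.Prime, Real.exp (13/(p:ℝ)^2) := by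
                  apply Finset.prod_le_prod (fun p _ => by positivity)
                  intro p _
                  have := Real.add_one_le_exp (13/(p:ℝ)^2)
                  linarith
              _ = Real.exp (∑ p ∈ s.filter Nat.Prime, 13/(p:ℝ)^2) := (Real.exp_sum _ _).symm
              _ ≤ Real.exp B := by
                  apply Real.exp_le_exp.mpr
                  rw [hB]
                  have : ∀ p : ℕ, 13/(p:ℝ)^2 = 13 * (1/(p:ℝ)^2) := fun p => by ring
                  simp only [this]
                  exact Summable.sum_le_tsum _ (fun p _ => by positivity) hBsum
          · apply Finset.prod_nonneg; intro p _; positivity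
          · norm_num
  -- global summability
  apply summable_of_sum_range_le (c := 2 * Real.exp B) hT0
  intro n
  have hs := (EulerProduct.summable_and_hasSum_factoredNumbers_prod_filter_prime_tsum
          hT1 hTmul hTloc (Finset.range n)).2
  have hs' : HasSum (Set.indicator (Nat.factoredNumbers (Finset.range n)) T)
      (∏ p ∈ (Finset.range n).filter Nat.Prime, ∑' e : ℕ, T (p^e)) :=
    hasSum_subtype_iff_indicator.mp hs
  have step1 : ∑ i ∈ Finset.range n, T i
      = ∑ i ∈ Finset.range n, Set.indicator (Nat.factoredNumbers (Finset.range n)) T i := by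
    apply Finset.sum_congr rfl
    intro i hi
    rcases Nat.eq_zero_or_pos i with h0 | h0
    · subst h0
      rw [Set.indicator_of_notMem (fun hmem => (Nat.mem_factoredNumbers.mp hmem).1 rfl)]
      simp [hT, hg0]
    · rw [Set.indicator_of_mem]
      rw [Nat.mem_factoredNumbers]
      refine ⟨by omega, fun q hq => ?_⟩
      rw [Finset.mem_range]
      calc q ≤ i := Nat.le_of_dvd h0 (Nat.dvd_of_mem_primeFactorsList hq)
        _ < n := Finset.mem_range.mp hi
  have step2 := sum_le_hasSum (Finset.range n)
    (fun i _ => Set.indicator_nonneg (fun j _ => hT0 j) i) hs'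
  have := prodbound (Finset.range n)
  rw [step1]
  linarith

open ArithmeticFunction in

lemma exists_g (f : ℕ → ℝ) (hf1 : f 1 = 1)
    (hfmult : ∀ m n : ℕ, Nat.Coprime m n → f (m * n) = f m * f n) :
    ∃ g : ℕ → ℝ, g 0 = 0 ∧ g 1 = 1 ∧
      (∀ m n : ℕ, Nat.Coprime m n → g (m*n) = g m * g n) ∧
      (∀ n : ℕ, n ≠ 0 → f n = ∑ d ∈ n.divisors, g d) ∧
      (∀ p : ℕ, p.Prime → ∀ e : ℕ, 1 ≤ e → g (p^e) = f (p^e) - f (p^(e-1))) := by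
  set F : ArithmeticFunction ℝ := ⟨fun n => if n = 0 then 0 else f n, rfl⟩ with hFdef
  have hFapp : ∀ n : ℕ, n ≠ 0 → F n = f n := fun n hn => if_neg hn
  have hFm : F.IsMultiplicative := by
    constructor
    · rw [hFapp 1 one_ne_zero]; exact hf1
    · intro m n hmn
      rcases Nat.eq_zero_or_pos m with h | h
      · subst h
        have : n = 1 := by simpa using hmn
        subst this
        simp [hFdef, hf1]
      rcases Nat.eq_zero_or_pos n with h' | h'
      · subst h'
        have : m = 1 := by simpa using hmn
        subst this
        simp [hFdef, hf1]
      rw [hFapp _ (by positivity), hFapp _ (by omega), hFapp _ (by omega)]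
      exact hfmult m n hmn
  set g : ArithmeticFunction ℝ := F * ↑(ArithmeticFunction.moebius) with hgdef
  have hgm : g.IsMultiplicative := hFm.mul (ArithmeticFunction.IsMultiplicative.intCast isMultiplicative_moebius)
  have hrec : g * ↑(ArithmeticFunction.zeta) = F := by
    rw [hgdef, mul_assoc, coe_moebius_mul_coe_zeta, mul_one]
  refine ⟨⇑g, g.map_zero, hgm.1, fun m n h => hgm.2 h, ?_, ?_⟩
  · intro n hn
    rw [← hFapp n hn, ← hrec, coe_mul_zeta_apply]
  · intro p hp e he
    rw [hgdef]
    rw [ArithmeticFunction.mul_apply]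
    rw [Nat.sum_divisorsAntidiagonal (f := fun x y => F x * (↑ArithmeticFunction.moebius : ArithmeticFunction ℝ) y)]
    rw [Nat.sum_divisors_prime_pow hp]
    have hterm : ∀ i ∈ Finset.range (e+1), i ∉ ({e-1, e} : Finset ℕ) →
        F (p^i) * (↑ArithmeticFunction.moebius : ArithmeticFunction ℝ) (p^e / p^i) = 0 := by
      intro i hi hni
      simp only [Finset.mem_insert, Finset.mem_singleton, not_or] at hni
      rw [Finset.mem_range] at hi
      rw [Nat.pow_div (by omega) hp.pos, ArithmeticFunction.intCoe_apply,
        ArithmeticFunction.moebius_apply_prime_pow hp (by omega), if_neg (by omega)]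
      simp
    have hsub : ({e-1, e} : Finset ℕ) ⊆ Finset.range (e+1) := by
      intro i hi
      simp only [Finset.mem_insert, Finset.mem_singleton] at hi
      rw [Finset.mem_range]; omega
    rw [← Finset.sum_subset hsub (fun i hi hni => hterm i hi hni)]
    rw [Finset.sum_pair (by omega : e - 1 ≠ e)]
    rw [Nat.pow_div (by omega) hp.pos, Nat.pow_div (le_refl e) hp.pos]
    have h1 : e - (e-1) = 1 := by omega
    rw [h1, Nat.sub_self, pow_one, pow_zero]
    rw [ArithmeticFunction.intCoe_apply, ArithmeticFunction.intCoe_apply,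
      ArithmeticFunction.moebius_apply_prime hp, ArithmeticFunction.moebius_apply_one]
    rw [hFapp _ (pow_ne_zero _ hp.pos.ne'), hFapp _ (pow_ne_zero _ hp.pos.ne')]
    push_cast
    ring


lemma eps_mul (m n : ℕ) (h : Nat.Coprime m n) :
    (-1:ℝ)^(m*n-1) = (-1)^(m-1) * (-1)^(n-1) := by
  rcases Nat.eq_zero_or_pos m with hm | hm
  · subst hm
    have : n = 1 := by simpa using h
    subst this; norm_num
  rcases Nat.eq_zero_or_pos n with hn | hn
  · subst hn
    have : m = 1 := by simpa using h.symm
    subst this; norm_num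
  rcases Nat.even_or_odd m with hem | hom
  · have hon : Odd n := by
      rcases Nat.even_or_odd n with hen | hon
      · exfalso
        have h2 : (2:ℕ) ∣ Nat.gcd m n := Nat.dvd_gcd hem.two_dvd hen.two_dvd
        rw [h] at h2
        omega
      · exact hon
    have h1 : Odd (m*n - 1) := Nat.Even.sub_odd (by exact Nat.one_le_iff_ne_zero.mpr (Nat.mul_ne_zero (by omega) (by omega))) (Nat.even_mul.mpr (Or.inl hem)) odd_one
    have h2 : Odd (m - 1) := Nat.Even.sub_odd hm hem odd_one
    have h3 : Even (n - 1) := Nat.Odd.sub_odd hon odd_one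
    rw [h1.neg_one_pow, h2.neg_one_pow, h3.neg_one_pow]; ring
  · rcases Nat.even_or_odd n with hen | hon
    · have h1 : Odd (m*n - 1) := Nat.Even.sub_odd (by exact Nat.one_le_iff_ne_zero.mpr (Nat.mul_ne_zero (by omega) (by omega))) (Nat.even_mul.mpr (Or.inr hen)) odd_one
      have h2 : Even (m - 1) := Nat.Odd.sub_odd hom odd_one
      have h3 : Odd (n - 1) := Nat.Even.sub_odd hn hen odd_one
      rw [h1.neg_one_pow, h2.neg_one_pow, h3.neg_one_pow]; ring
    · have h1 : Even (m*n - 1) := Nat.Odd.sub_odd (hom.mul hon) odd_one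
      have h2 : Even (m - 1) := Nat.Odd.sub_odd hom odd_one
      have h3 : Even (n - 1) := Nat.Odd.sub_odd hon odd_one
      rw [h1.neg_one_pow, h2.neg_one_pow, h3.neg_one_pow]; ring

lemma one_sub_ge_exp (x : ℝ) (h0 : 0 ≤ x) (h1 : x ≤ 8/9) : Real.exp (-(9*x)) ≤ 1 - x := by
  have h2 : 1 + 9*x ≤ Real.exp (9*x) := by linarith [Real.add_one_le_exp (9*x)]
  have hpos : (0:ℝ) < Real.exp (9*x) := Real.exp_pos _
  have hx : (0:ℝ) < 1 - x := by linarith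
  rw [Real.exp_neg, inv_le_iff_one_le_mul₀' hpos]
  nlinarith [h2, mul_le_mul_of_nonneg_left h2 (le_of_lt hx)]

end helpers

set_option maxHeartbeats 1000000 in
/-- for the multiplicative function with `f(p) = 1`, `f(p²) = -6`,
`f(p^ν) = 0` (`ν ≥ 3`), the mean value is `0`, and the alternating mean value exists
and equals `∏_{p > 2} (1 - 7/p² + 6/p³) ≠ 0`. -/
theorem alternating_mean_value_special_function
    (f : ℕ → ℝ)
    (hf1 : f 1 = 1)
    (hfmult : ∀ m n : ℕ, Nat.Coprime m n → f (m * n) = f m * f n)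
    (hp1 : ∀ p : ℕ, p.Prime → f p = 1)
    (hp2 : ∀ p : ℕ, p.Prime → f (p ^ 2) = -6)
    (hp3 : ∀ p : ℕ, p.Prime → ∀ ν : ℕ, 3 ≤ ν → f (p ^ ν) = 0) :
    Tendsto (fun N : ℕ => (1 / (N : ℝ)) * ∑ n ∈ Finset.Icc 1 N, f n) atTop (nhds 0) ∧
    Tendsto (fun N : ℕ => (1 / (N : ℝ)) * ∑ n ∈ Finset.Icc 1 N, (-1 : ℝ) ^ (n - 1) * f n)
      atTop
      (nhds (∏' p : {p : ℕ // p.Prime ∧ 2 < p},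
        (1 - 7 / (p : ℝ) ^ 2 + 6 / (p : ℝ) ^ 3))) ∧
    (∏' p : {p : ℕ // p.Prime ∧ 2 < p}, (1 - 7 / (p : ℝ) ^ 2 + 6 / (p : ℝ) ^ 3)) ≠ 0 := by
  classical
  ------------------------------------------------------------------
  -- PART 1 : the function g = f ⋆ μ and its mean value
  ------------------------------------------------------------------
  obtain ⟨g, hg0, hg1, hgmul, hgrec, hgpp⟩ := exists_g f hf1 hfmult
  have hgP : ∀ p : ℕ, p.Prime → g p = 0 := by
    intro p hp
    have h := hgpp p hp 1 le_rfl
    rw [pow_one, pow_zero, hp1 p hp, hf1] at h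
    simpa using h
  have hgP2 : ∀ p : ℕ, p.Prime → g (p^2) = -7 := by
    intro p hp
    have h := hgpp p hp 2 (by norm_num)
    norm_num [hp2 p hp, pow_one, hp1 p hp] at h
    linarith
  have hgP3 : ∀ p : ℕ, p.Prime → g (p^3) = 6 := by
    intro p hp
    have h := hgpp p hp 3 (by norm_num)
    norm_num [hp3 p hp 3 le_rfl, hp2 p hp] at h
    linarith
  have hgP4 : ∀ p : ℕ, p.Prime → ∀ e, 4 ≤ e → g (p^e) = 0 := by
    intro p hp e he
    have h := hgpp p hp e (by omega)
    rw [hp3 p hp e (by omega), hp3 p hp (e-1) (by omega)] at h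
    simpa using h
  have hsum_g : Summable (fun n : ℕ => |g n| / n) := by
    apply summable_aux g hg0 hg1 hgmul
    · rw [show (2:ℕ) = 2^1 by norm_num, pow_one, hgP 2 Nat.prime_two]; norm_num
    · exact fun p hp _ => hgP p hp
    · intro p hp; rw [hgP2 p hp]; norm_num
    · intro p hp; rw [hgP3 p hp]; norm_num
    · exact hgP4
  have hGhat1 : (fun n : ℕ => g n / (n:ℝ)) 1 = 1 := by simp [hg1]
  have hGhat0 : (fun n : ℕ => g n / (n:ℝ)) 0 = 0 := by simp [hg0]
  have hGhatmul : ∀ {m n : ℕ}, Nat.Coprime m n →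
      (fun n : ℕ => g n / (n:ℝ)) (m * n) =
        (fun n : ℕ => g n / (n:ℝ)) m * (fun n : ℕ => g n / (n:ℝ)) n := by
    intro m n hmn
    simp only [hgmul m n hmn, Nat.cast_mul, div_mul_div_comm]
  have hGnorm : Summable (fun n : ℕ => ‖g n / (n:ℝ)‖) := by
    have : ∀ n : ℕ, ‖g n / (n:ℝ)‖ = |g n| / n := by
      intro n
      rw [Real.norm_eq_abs, abs_div, Nat.abs_cast]
    simpa only [this] using hsum_g
  have HP1 := EulerProduct.eulerProduct_hasProd hGhat1 hGhatmul hGnorm hGhat0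
  have hloczero : (∑' e : ℕ, g (2^e) / ((2^e : ℕ) : ℝ)) = 0 := by
    have h4 : ∀ e, 4 ≤ e → (fun n : ℕ => g n / (n:ℝ)) (2^e) = 0 := by
      intro e he
      simp only
      rw [hgP4 2 Nat.prime_two e he]
      simp
    have hl := local_tsum_eq (fun n : ℕ => g n / (n:ℝ)) 2 h4
    rw [hl, hg1, hgP 2 Nat.prime_two, hgP2 2 Nat.prime_two, hgP3 2 Nat.prime_two]
    norm_num
  have hasprod0 : HasProd (fun p : Nat.Primes => ∑' e : ℕ, g (((p:ℕ))^e) / (((p:ℕ))^e : ℕ)) 0 := by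
    refine (tendsto_congr' ?_).mp tendsto_const_nhds
    filter_upwards [eventually_ge_atTop ({⟨2, Nat.prime_two⟩} : Finset Nat.Primes)] with s hs
    exact (Finset.prod_eq_zero (hs (Finset.mem_singleton_self _)) hloczero).symm
  have tsum_zero : (∑' n : ℕ, g n / (n:ℝ)) = 0 := HP1.unique hasprod0
  have part1 : Tendsto (fun N : ℕ => (1 / (N : ℝ)) * ∑ n ∈ Finset.Icc 1 N, f n)
      atTop (nhds 0) := by
    rw [← tsum_zero]
    apply (wintner g hg0 hsum_g).congr
    intro N
    congr 1
    rw [← swap_sum g N]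
    apply Finset.sum_congr rfl
    intro n hn
    rw [Finset.mem_Icc] at hn
    exact (hgrec n (by omega)).symm
  ------------------------------------------------------------------
  -- PART 2 : the alternating function h and its mean value
  ------------------------------------------------------------------
  set h : ℕ → ℝ := fun n => (-1:ℝ)^(n-1) * f n with hhdef
  have hh1 : h 1 = 1 := by simp [hhdef, hf1]
  have hhmult : ∀ m n : ℕ, Nat.Coprime m n → h (m * n) = h m * h n := by
    intro m n hmn
    simp only [hhdef]
    rw [eps_mul m n hmn, hfmult m n hmn]
    ring
  obtain ⟨k, hk0, hk1, hkmul, hkrec, hkpp⟩ := exists_g h hh1 hhmult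
  -- values of h on odd prime powers
  have hodd : ∀ p : ℕ, p.Prime → 2 < p → ∀ e : ℕ, h (p^e) = f (p^e) := by
    intro p hp hgt e
    have hoddp : Odd p := hp.odd_of_ne_two (by omega)
    have : Even (p^e - 1) := Nat.Odd.sub_odd (hoddp.pow) odd_one
    simp [hhdef, this.neg_one_pow]
  have h2v : h 2 = -1 := by
    have : h 2 = (-1:ℝ)^(2-1) * f 2 := rfl
    rw [this, hp1 2 Nat.prime_two]; norm_num
  have hf4 : f 4 = -6 := by
    have := hp2 2 Nat.prime_two; norm_num at this; exact this
  have hf8 : f 8 = 0 := by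
    have := hp3 2 Nat.prime_two 3 le_rfl; norm_num at this; exact this
  have h4v : h 4 = 6 := by norm_num [hhdef, hf4]
  have h8v : h 8 = 0 := by norm_num [hhdef, hf8]
  have hzero3 : ∀ p : ℕ, p.Prime → ∀ e, 3 ≤ e → h (p^e) = 0 := by
    intro p hp e he
    have : h (p^e) = (-1:ℝ)^(p^e-1) * f (p^e) := rfl
    rw [this, hp3 p hp e he, mul_zero]
  -- values of k
  have hkP2v : k 2 = -2 := by
    have hk := hkpp 2 Nat.prime_two 1 le_rfl
    rw [pow_one, pow_zero, hh1, h2v] at hk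
    linarith
  have hkP : ∀ p : ℕ, p.Prime → 2 < p → k p = 0 := by
    intro p hp hgt
    have hk := hkpp p hp 1 le_rfl
    rw [pow_one, pow_zero, hh1] at hk
    rw [hk, show h p = f p from by simpa [pow_one] using hodd p hp hgt 1, hp1 p hp]
    ring
  have hkP2 : ∀ p : ℕ, p.Prime → |k (p^2)| ≤ 7 := by
    intro p hp
    have hk := hkpp p hp 2 (by norm_num)
    norm_num [pow_one] at hk
    rcases eq_or_lt_of_le hp.two_le with heq | hgt
    · subst heq
      norm_num at hk
      norm_num [hk, h4v, h2v]
    · rw [hk, show h (p^2) = f (p^2) from hodd p hp hgt 2,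
        show h p = f p from by simpa [pow_one] using hodd p hp hgt 1,
        hp2 p hp, hp1 p hp]
      norm_num
  have hkP3 : ∀ p : ℕ, p.Prime → |k (p^3)| ≤ 6 := by
    intro p hp
    have hk := hkpp p hp 3 (by norm_num)
    norm_num at hk
    rcases eq_or_lt_of_le hp.two_le with heq | hgt
    · subst heq
      norm_num at hk
      norm_num [hk, h4v, h8v]
    · rw [hk, hzero3 p hp 3 le_rfl, show h (p^2) = f (p^2) from hodd p hp hgt 2, hp2 p hp]
      norm_num
  have hkP4 : ∀ p : ℕ, p.Prime → ∀ e, 4 ≤ e → k (p^e) = 0 := by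
    intro p hp e he
    have hk := hkpp p hp e (by omega)
    rw [hzero3 p hp e (by omega), hzero3 p hp (e-1) (by omega)] at hk
    simpa using hk
  have hsum_k : Summable (fun n : ℕ => |k n| / n) := by
    apply summable_aux k hk0 hk1 hkmul
    · rw [hkP2v]; norm_num
    · exact hkP
    · exact hkP2
    · exact hkP3
    · exact hkP4
  have hKhat1 : (fun n : ℕ => k n / (n:ℝ)) 1 = 1 := by simp [hk1]
  have hKhat0 : (fun n : ℕ => k n / (n:ℝ)) 0 = 0 := by simp [hk0]
  have hKhatmul : ∀ {m n : ℕ}, Nat.Coprime m n →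
      (fun n : ℕ => k n / (n:ℝ)) (m * n) =
        (fun n : ℕ => k n / (n:ℝ)) m * (fun n : ℕ => k n / (n:ℝ)) n := by
    intro m n hmn
    simp only [hkmul m n hmn, Nat.cast_mul, div_mul_div_comm]
  have hKnorm : Summable (fun n : ℕ => ‖k n / (n:ℝ)‖) := by
    have : ∀ n : ℕ, ‖k n / (n:ℝ)‖ = |k n| / n := by
      intro n
      rw [Real.norm_eq_abs, abs_div, Nat.abs_cast]
    simpa only [this] using hsum_k
  have HP2 := EulerProduct.eulerProduct_hasProd hKhat1 hKhatmul hKnorm hKhat0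
  -- local factors of k
  have hLF : ∀ p : Nat.Primes, (∑' e : ℕ, k (((p:ℕ))^e) / ((((p:ℕ))^e : ℕ) : ℝ))
      = 1 + k (p:ℕ) / (p:ℝ) + k ((p:ℕ)^2) / (p:ℝ)^2 + k ((p:ℕ)^3) / (p:ℝ)^3 := by
    intro p
    have h4 : ∀ e, 4 ≤ e → (fun n : ℕ => k n / (n:ℝ)) ((p:ℕ)^e) = 0 := by
      intro e he
      simp only
      rw [hkP4 p p.prop e he]
      simp
    have hl := local_tsum_eq (fun n : ℕ => k n / (n:ℝ)) (p:ℕ) h4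
    rw [hl, hk1]
    push_cast
    ring
  have hLFodd : ∀ p : Nat.Primes, 2 < (p:ℕ) →
      (∑' e : ℕ, k (((p:ℕ))^e) / ((((p:ℕ))^e : ℕ) : ℝ))
        = 1 - 7 / ((p:ℕ):ℝ)^2 + 6 / ((p:ℕ):ℝ)^3 := by
    intro p hgt
    have hppos : (0:ℝ) < ((p:ℕ):ℝ) := by
      have := p.prop.two_le; positivity
    have hk2 : k ((p:ℕ)^2) = -7 := by
      have hk := hkpp (p:ℕ) p.prop 2 (by norm_num)
      norm_num [pow_one] at hk
      rw [hk, hodd (p:ℕ) p.prop hgt 2,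
        show h (p:ℕ) = f (p:ℕ) from by simpa [pow_one] using hodd (p:ℕ) p.prop hgt 1,
        hp2 (p:ℕ) p.prop, hp1 (p:ℕ) p.prop]
      ring
    have hk3 : k ((p:ℕ)^3) = 6 := by
      have hk := hkpp (p:ℕ) p.prop 3 (by norm_num)
      norm_num at hk
      rw [hk, hzero3 (p:ℕ) p.prop 3 le_rfl, hodd (p:ℕ) p.prop hgt 2, hp2 (p:ℕ) p.prop]
      ring
    rw [hLF p, hkP (p:ℕ) p.prop hgt, hk2, hk3]
    ring
  have hLF2 : (∑' e : ℕ, k (2^e) / ((2^e : ℕ) : ℝ)) = 1 := by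
    have hk4 : k 4 = 7 := by
      have hk := hkpp 2 Nat.prime_two 2 (by norm_num)
      norm_num [pow_one] at hk
      rw [hk, h4v, h2v]; ring
    have hk8 : k 8 = -6 := by
      have hk := hkpp 2 Nat.prime_two 3 (by norm_num)
      norm_num at hk
      rw [hk, h8v, h4v]
      ring
    rw [hLF ⟨2, Nat.prime_two⟩]
    show (1:ℝ) + k 2 / (2:ℝ) + k (2^2) / (2:ℝ)^2 + k (2^3) / (2:ℝ)^3 = 1
    norm_num [hkP2v, hk4, hk8]
  -- transfer the Euler product to the subtype of odd primes
  set i : {p : ℕ // p.Prime ∧ 2 < p} → Nat.Primes := fun q => ⟨q.1, q.2.1⟩ with hidef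
  have hi : Function.Injective i := by
    intro a b hab
    have : (i a : ℕ) = (i b : ℕ) := congrArg Subtype.val hab
    exact Subtype.ext this
  have hrange : ∀ x : Nat.Primes, x ∉ Set.range i →
      (∑' e : ℕ, k (((x:ℕ))^e) / ((((x:ℕ))^e : ℕ) : ℝ)) = 1 := by
    intro x hx
    have hx2 : (x:ℕ) = 2 := by
      by_contra hne
      have : 2 < (x:ℕ) := lt_of_le_of_ne x.prop.two_le (Ne.symm hne)
      exact hx ⟨⟨(x:ℕ), x.prop, this⟩, rfl⟩
    have : x = ⟨2, Nat.prime_two⟩ := Subtype.ext hx2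
    rw [this]
    exact hLF2
  have HP3 : HasProd
      (fun q : {p : ℕ // p.Prime ∧ 2 < p} =>
        (∑' e : ℕ, k (((q:ℕ))^e) / ((((q:ℕ))^e : ℕ) : ℝ)))
      (∑' n : ℕ, k n / (n:ℝ)) := by
    have := (hi.hasProd_iff hrange).mpr HP2
    exact this
  have HP4 : HasProd
      (fun q : {p : ℕ // p.Prime ∧ 2 < p} => (1 - 7 / ((q:ℕ):ℝ)^2 + 6 / ((q:ℕ):ℝ)^3))
      (∑' n : ℕ, k n / (n:ℝ)) := by
    have hfun : (fun q : {p : ℕ // p.Prime ∧ 2 < p} =>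
        (∑' e : ℕ, k (((i q : ℕ))^e) / ((((i q : ℕ))^e : ℕ) : ℝ)))
        = (fun q : {p : ℕ // p.Prime ∧ 2 < p} =>
            (1 - 7 / ((q:ℕ):ℝ)^2 + 6 / ((q:ℕ):ℝ)^3)) :=
      funext (fun q => hLFodd (i q) q.prop.2)
    exact hfun ▸ HP3
  have htprod : (∏' p : {p : ℕ // p.Prime ∧ 2 < p},
      (1 - 7 / ((p:ℕ):ℝ) ^ 2 + 6 / ((p:ℕ):ℝ) ^ 3)) = ∑' n : ℕ, k n / (n:ℝ) :=
    HP4.tprod_eq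
  have part2 : Tendsto (fun N : ℕ => (1 / (N : ℝ)) *
      ∑ n ∈ Finset.Icc 1 N, (-1 : ℝ) ^ (n - 1) * f n) atTop
      (nhds (∏' p : {p : ℕ // p.Prime ∧ 2 < p},
        (1 - 7 / ((p:ℕ):ℝ) ^ 2 + 6 / ((p:ℕ):ℝ) ^ 3))) := by
    rw [htprod]
    apply (wintner k hk0 hsum_k).congr
    intro N
    congr 1
    rw [← swap_sum k N]
    apply Finset.sum_congr rfl
    intro n hn
    rw [Finset.mem_Icc] at hn
    exact (hkrec n (by omega)).symm
  ------------------------------------------------------------------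
  -- PART 3 : the product is nonzero
  ------------------------------------------------------------------
  have hsum63 : Summable (fun n : ℕ => 63 * (1/(n:ℝ)^2)) :=
    (Real.summable_one_div_nat_pow.mpr one_lt_two).mul_left 63
  set B : ℝ := ∑' n : ℕ, 63 * (1/(n:ℝ)^2) with hBdef
  have hfac : ∀ p : Nat.Primes,
      Real.exp (-(63 * (1/((p:ℕ):ℝ)^2))) ≤
        (∑' e : ℕ, k (((p:ℕ))^e) / ((((p:ℕ))^e : ℕ) : ℝ)) := by
    intro p
    rcases eq_or_lt_of_le p.prop.two_le with heq | hgt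
    · have : p = ⟨2, Nat.prime_two⟩ := Subtype.ext heq.symm
      rw [this]
      rw [show ((((⟨2, Nat.prime_two⟩ : Nat.Primes)):ℕ):ℝ) = (2:ℝ) from by norm_num]
      calc Real.exp (-(63 * (1/(2:ℝ)^2))) ≤ 1 := by
            rw [Real.exp_le_one_iff]; norm_num
        _ = _ := hLF2.symm
    · have hp3' : (3:ℝ) ≤ ((p:ℕ):ℝ) := by exact_mod_cast hgt
      have hppos : (0:ℝ) < ((p:ℕ):ℝ) := by linarith
      set x : ℝ := 7/((p:ℕ):ℝ)^2 - 6/((p:ℕ):ℝ)^3 with hxdef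
      have hx0 : 0 ≤ x := by
        rw [hxdef, sub_nonneg, div_le_div_iff₀ (by positivity) (by positivity)]
        nlinarith
      have hx7 : x ≤ 7/((p:ℕ):ℝ)^2 := by
        rw [hxdef]
        have : 0 ≤ 6/((p:ℕ):ℝ)^3 := by positivity
        linarith
      have hx89 : x ≤ 8/9 := by
        have h79 : 7/((p:ℕ):ℝ)^2 ≤ 7/9 := by
          apply div_le_div_of_nonneg_left (by norm_num) (by norm_num) (by nlinarith)
        linarith
      calc Real.exp (-(63 * (1/((p:ℕ):ℝ)^2))) ≤ Real.exp (-(9*x)) := by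
            apply Real.exp_le_exp.mpr
            have : 9 * x ≤ 63 * (1/((p:ℕ):ℝ)^2) := by
              rw [show (63:ℝ) * (1/((p:ℕ):ℝ)^2) = 9 * (7/((p:ℕ):ℝ)^2) from by ring]
              linarith
            linarith
        _ ≤ 1 - x := one_sub_ge_exp x hx0 hx89
        _ = _ := by
            rw [hLFodd p hgt, hxdef]; ring
  have hprodlb : ∀ s : Finset Nat.Primes,
      Real.exp (-B) ≤ ∏ p ∈ s, (∑' e : ℕ, k (((p:ℕ))^e) / ((((p:ℕ))^e : ℕ) : ℝ)) := by
    intro s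
    calc Real.exp (-B)
        ≤ Real.exp (∑ p ∈ s, -(63 * (1/((p:ℕ):ℝ)^2))) := by
          apply Real.exp_le_exp.mpr
          rw [Finset.sum_neg_distrib, neg_le_neg_iff]
          calc ∑ p ∈ s, 63 * (1/((p:ℕ):ℝ)^2)
              = ∑ n ∈ s.map ⟨Subtype.val, Subtype.val_injective⟩, 63 * (1/(n:ℝ)^2) :=
                (Finset.sum_map s ⟨Subtype.val, Subtype.val_injective⟩
                  (fun n : ℕ => 63 * (1/(n:ℝ)^2))).symm
            _ ≤ B := Summable.sum_le_tsum _ (fun n _ => by positivity) hsum63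
      _ = ∏ p ∈ s, Real.exp (-(63 * (1/((p:ℕ):ℝ)^2))) := Real.exp_sum _ _
      _ ≤ ∏ p ∈ s, (∑' e : ℕ, k (((p:ℕ))^e) / ((((p:ℕ))^e : ℕ) : ℝ)) := by
          apply Finset.prod_le_prod (fun p _ => (Real.exp_pos _).le) (fun p _ => hfac p)
  have hpos : 0 < ∑' n : ℕ, k n / (n:ℝ) :=
    lt_of_lt_of_le (Real.exp_pos (-B)) (ge_of_tendsto' HP2 hprodlb)
  have part3 : (∏' p : {p : ℕ // p.Prime ∧ 2 < p},
      (1 - 7 / ((p:ℕ):ℝ) ^ 2 + 6 / ((p:ℕ):ℝ) ^ 3)) ≠ 0 := by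
    rw [htprod]
    exact ne_of_gt hpos
  exact ⟨part1, part2, part3⟩
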